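/- There exist Lebesgue measurable sets A, B ⊆ [0,1]^2 such that the BKR combination A □ B is not Lebesgue measurable. -/

import Mathlib

open MeasureTheory unitInterval

/-- `cyl A K` is the maximal cylinder subset of `A` that is free in the coordinates
outside `K`: the set of `ω` such that every `ω'` agreeing with `ω` on `K` lies in `A`. -/
def cyl {ι S : Type*} (A : Set (ι → S)) (K : Set ι) : Set (ι → S) :=
  {ω | ∀ ω' : ι → S, (∀ i ∈ K, ω' i = ω i) → ω' ∈ A}

/-- The BKR combination `A □ B := ⋃_{K ⊆ [d]} ([A]_K ∩ [B]_{Kᶜ})`. -/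
def bkr {ι S : Type*} (A B : Set (ι → S)) : Set (ι → S) :=
  ⋃ K : Set ι, cyl A K ∩ cyl B Kᶜ

/-- The simultaneous `r`-fold BKR combination: union over pairwise disjoint
`J_1, …, J_r` of `⋂ i, [A i]_{J i}`. -/
def bkrMulti {ι S : Type*} (r : ℕ) (A : Fin r → Set (ι → S)) : Set (ι → S) :=
  ⋃ (J : Fin r → Set ι) (_ : Pairwise (Function.onFun Disjoint J)), ⋂ i, cyl (A i) (J i)

open Set symmDiff
open scoped symmDiff

noncomputable section BKRAux

/-- The rationals as an additive subgroup of `ℝ`. -/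
def ratSG : AddSubgroup ℝ where
  carrier := Set.range ((↑) : ℚ → ℝ)
  add_mem' := by rintro a b ⟨p, rfl⟩ ⟨q, rfl⟩; exact ⟨p + q, by push_cast; ring⟩
  zero_mem' := ⟨0, by norm_num⟩
  neg_mem' := by rintro a ⟨p, rfl⟩; exact ⟨-p, by push_cast; ring⟩

/-- A representative in `[0,1)` of each coset of the rationals. -/
def vrep (c : ℝ ⧸ ratSG) : ℝ := Int.fract c.out

lemma vrep_mem (c : ℝ ⧸ ratSG) : vrep c ∈ Set.Ico (0:ℝ) 1 :=
  ⟨Int.fract_nonneg _, Int.fract_lt_one _⟩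

lemma mk_vrep (c : ℝ ⧸ ratSG) : (QuotientAddGroup.mk (vrep c) : ℝ ⧸ ratSG) = c := by
  have h1 : (QuotientAddGroup.mk (vrep c) : ℝ ⧸ ratSG) = QuotientAddGroup.mk c.out := by
    rw [QuotientAddGroup.eq]
    refine ⟨(⌊c.out⌋ : ℚ), ?_⟩
    push_cast
    have := Int.self_sub_fract c.out
    simp only [vrep]
    linarith
  rw [h1, QuotientAddGroup.out_eq']

/-- A Vitali set: one representative in `[0,1)` from each coset of `ℚ` in `ℝ`. -/
def vitali : Set ℝ := Set.range vrep

lemma vitali_sub : vitali ⊆ Set.Ico (0:ℝ) 1 := by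
  rintro x ⟨c, rfl⟩; exact vrep_mem c

lemma vitali_unique {v w : ℝ} (hv : v ∈ vitali) (hw : w ∈ vitali) (q : ℚ)
    (h : v - w = (q : ℝ)) : v = w := by
  obtain ⟨c, rfl⟩ := hv
  obtain ⟨d, rfl⟩ := hw
  have : (QuotientAddGroup.mk (vrep c) : ℝ ⧸ ratSG) = QuotientAddGroup.mk (vrep d) := by
    rw [QuotientAddGroup.eq]
    exact ⟨-q, by push_cast; linarith⟩
  rw [mk_vrep, mk_vrep] at this
  rw [this]

lemma vitali_cover (x : ℝ) : ∃ q : ℚ, x + (q : ℝ) ∈ vitali := by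
  have h := mk_vrep (QuotientAddGroup.mk x)
  rw [QuotientAddGroup.eq] at h
  obtain ⟨q, hq⟩ := h
  refine ⟨-q, ?_⟩
  have hx : x + ((-q : ℚ) : ℝ) = vrep (QuotientAddGroup.mk x) := by push_cast; linarith
  rw [hx]
  exact ⟨_, rfl⟩

lemma vitali_not_nullMeasurable : ¬ NullMeasurableSet vitali (volume : Measure ℝ) := by
  intro h
  set ι := ↥(Set.Icc (-1:ℚ) 1) with hι
  have hinf : Infinite ι := Set.Icc.infinite (by norm_num)
  set f : ι → Set ℝ := fun q => (fun x : ℝ => x + ((q : ℚ) : ℝ)) ⁻¹' vitali with hf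
  have hmp : ∀ q : ι, MeasurePreserving (fun x : ℝ => x + ((q : ℚ) : ℝ)) volume volume :=
    fun q => measurePreserving_add_right volume _
  have hnm : ∀ q : ι, NullMeasurableSet (f q) volume := fun q =>
    h.preimage (hmp q).quasiMeasurePreserving
  have hvol : ∀ q : ι, volume (f q) = volume vitali := fun q => (hmp q).measure_preimage h
  have hdisj : Pairwise (Function.onFun Disjoint f) := by
    intro q1 q2 hne
    rw [Function.onFun, Set.disjoint_left]
    intro x h1 h2
    have heq : x + ((q1 : ℚ) : ℝ) = x + ((q2 : ℚ) : ℝ) :=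
      vitali_unique h1 h2 ((q1 : ℚ) - (q2 : ℚ)) (by push_cast; ring)
    exact hne (Subtype.ext (by exact_mod_cast add_left_cancel heq))
  have hcover : Set.Icc (0:ℝ) 1 ⊆ ⋃ q, f q := by
    intro x hx
    obtain ⟨q, hq⟩ := vitali_cover x
    have hb := vitali_sub hq
    have hq1 : q ∈ Set.Icc (-1:ℚ) 1 := by
      simp only [Set.mem_Ico] at hb
      simp only [Set.mem_Icc] at hx ⊢
      constructor
      · have : (-1 : ℝ) ≤ (q : ℝ) := by linarith
        exact_mod_cast this
      · have : (q : ℝ) ≤ 1 := by linarith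
        exact_mod_cast this
    exact Set.mem_iUnion.mpr ⟨⟨q, hq1⟩, hq⟩
  have hsub : (⋃ q, f q) ⊆ Set.Icc (-1:ℝ) 2 := by
    intro x hx
    obtain ⟨q, hq⟩ := Set.mem_iUnion.mp hx
    have hb := vitali_sub hq
    simp only [Set.mem_Ico] at hb
    have hq1 : ((q : ℚ) : ℝ) ∈ Set.Icc (-1:ℝ) 1 := by
      obtain ⟨h1, h2⟩ := q.2
      constructor <;> [exact_mod_cast h1; exact_mod_cast h2]
    obtain ⟨h1, h2⟩ := hq1
    constructor <;> linarith
  have hU : volume (⋃ q, f q) = ∑' _ : ι, volume vitali := by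
    rw [measure_iUnion₀ (hdisj.mono fun _ _ hd => hd.aedisjoint) hnm]
    exact tsum_congr hvol
  by_cases hV : volume vitali = 0
  · have h0 : volume (Set.Icc (0:ℝ) 1) = 0 := by
      refine le_antisymm ?_ (zero_le)
      calc volume (Set.Icc (0:ℝ) 1) ≤ volume (⋃ q, f q) := measure_mono hcover
        _ = 0 := by rw [hU, hV]; simp
    rw [Real.volume_Icc] at h0
    norm_num at h0
  · have htop : (∑' _ : ι, volume vitali) = ⊤ := ENNReal.tsum_const_eq_top_of_ne_zero hV
    have hle : volume (⋃ q, f q) ≤ volume (Set.Icc (-1:ℝ) 2) := measure_mono hsub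
    rw [hU, htop, Real.volume_Icc] at hle
    exact absurd (le_antisymm le_top hle).symm (by simp)

lemma I_volume_singleton (x : I) : volume ({x} : Set I) = 0 := by
  rw [unitInterval.volume_def]
  rw [Measure.comap_apply _ Subtype.val_injective
    (fun s hs => (MeasurableEmbedding.subtype_coe measurableSet_Icc).measurableSet_image' hs) _
    (measurableSet_singleton x)]
  simp

lemma image_nullMeasurable {W : Set I} (h : NullMeasurableSet W (volume : Measure I)) :
    NullMeasurableSet (Subtype.val '' W) (volume : Measure ℝ) := by
  obtain ⟨T, hT, hae⟩ := h
  have hemb : MeasurableEmbedding ((↑) : I → ℝ) :=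
    MeasurableEmbedding.subtype_coe measurableSet_Icc
  refine ⟨Subtype.val '' T, hemb.measurableSet_image' hT, ?_⟩
  have h0 : volume (W ∆ T) = 0 := measure_symmDiff_eq_zero_iff.mpr hae
  have key : volume (Subtype.val '' (W ∆ T)) = volume (W ∆ T) :=
    (Measure.comap_apply₀ _ volume Subtype.val_injective
      (fun s hs => (hemb.measurableSet_image' hs).nullMeasurableSet)
      (NullMeasurableSet.of_null h0)).symm
  rw [← measure_symmDiff_eq_zero_iff, ← Set.image_symmDiff Subtype.val_injective, key]
  exact h0

/-- The Vitali set as a subset of the unit interval (with `0` removed). -/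
def vitaliI : Set I := Subtype.val ⁻¹' (vitali \ {0})

lemma zero_not_mem_vitaliI : (0 : I) ∉ vitaliI := by
  simp [vitaliI]

lemma vitaliI_not_nullMeasurable : ¬ NullMeasurableSet vitaliI (volume : Measure I) := by
  intro h
  have himg : Subtype.val '' vitaliI = vitali \ {0} := by
    rw [vitaliI, Subtype.image_preimage_coe]
    refine Set.inter_eq_right.mpr ?_
    intro x hx
    have := vitali_sub hx.1
    exact ⟨this.1, this.2.le⟩
  have h2 := image_nullMeasurable h
  rw [himg] at h2
  have h3 : NullMeasurableSet (vitali ∩ {0}) (volume : Measure ℝ) :=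
    NullMeasurableSet.of_null (le_antisymm
      (le_trans (measure_mono Set.inter_subset_right) (by simp)) (zero_le))
  have h4 : vitali = (vitali \ {0}) ∪ (vitali ∩ {0}) := by
    rw [Set.diff_union_inter]
  exact vitali_not_nullMeasurable (h4 ▸ h2.union h3)

lemma prod_not_nullMeasurable {W : Set I} (h : ¬ NullMeasurableSet W (volume : Measure I)) :
    ¬ NullMeasurableSet ((Set.univ : Set I) ×ˢ W) (volume : Measure (I × I)) := by
  intro hnm
  obtain ⟨T, hT, hae⟩ := hnm
  have hD : volume ((Set.univ ×ˢ W) ∆ T) = 0 := measure_symmDiff_eq_zero_iff.mpr hae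
  rw [Measure.volume_eq_prod] at hD
  have hs := Measure.measure_ae_null_of_prod_null hD
  have hne : (MeasureTheory.ae (volume : Measure I)).NeBot := by
    rw [ae_neBot]
    exact (IsProbabilityMeasure.ne_zero volume)
  obtain ⟨x, hx⟩ := hs.exists
  apply h
  have hpre : Prod.mk x ⁻¹' ((Set.univ ×ˢ W) ∆ T) = W ∆ (Prod.mk x ⁻¹' T) := by
    rw [Set.preimage_symmDiff]
    congr 1
    ext y; simp
  have hx' : volume (W ∆ (Prod.mk x ⁻¹' T)) = 0 := by
    rw [← hpre]; simpa using hx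
  exact ⟨Prod.mk x ⁻¹' T, measurable_prodMk_left hT, measure_symmDiff_eq_zero_iff.mp hx'⟩

lemma hmpFinTwo : MeasurePreserving (⇑(MeasurableEquiv.finTwoArrow : (Fin 2 → I) ≃ᵐ I × I))
    (volume : Measure (Fin 2 → I)) (volume : Measure (I × I)) :=
  measurePreserving_finTwoArrow (volume : Measure I)

lemma coord_null0 : volume {ω : Fin 2 → I | ω 0 = 0} = 0 := by
  have h : {ω : Fin 2 → I | ω 0 = 0} =
      ⇑(MeasurableEquiv.finTwoArrow : (Fin 2 → I) ≃ᵐ I × I) ⁻¹'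
        (({0} : Set I) ×ˢ (Set.univ : Set I)) := by
    ext ω; simp [MeasurableEquiv.finTwoArrow, eq_comm]
  rw [h, hmpFinTwo.measure_preimage
    (((measurableSet_singleton (0:I)).prod MeasurableSet.univ).nullMeasurableSet),
    Measure.volume_eq_prod, Measure.prod_prod]
  simp [I_volume_singleton]

lemma coord_null1 : volume {ω : Fin 2 → I | ω 1 = 0} = 0 := by
  have h : {ω : Fin 2 → I | ω 1 = 0} =
      ⇑(MeasurableEquiv.finTwoArrow : (Fin 2 → I) ≃ᵐ I × I) ⁻¹'
        ((Set.univ : Set I) ×ˢ ({0} : Set I)) := by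
    ext ω; simp [MeasurableEquiv.finTwoArrow, eq_comm]
  rw [h, hmpFinTwo.measure_preimage
    ((MeasurableSet.univ.prod (measurableSet_singleton (0:I))).nullMeasurableSet),
    Measure.volume_eq_prod, Measure.prod_prod]
  simp [I_volume_singleton]

/-- The first witness set: `{ω | ω 0 ≠ 0}`. -/
def Aset : Set (Fin 2 → I) := {ω | ω 0 ≠ 0}

/-- The second witness set. -/
def Bset : Set (Fin 2 → I) := {ω | ω 1 ≠ 0 ∧ (ω 1 ∈ vitaliI ∨ ω 0 ≠ 0)}

lemma Aset_nullMeasurable : NullMeasurableSet Aset (volume : Measure (Fin 2 → I)) :=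
  (((MeasurableSet.singleton (0:I)).compl).preimage (measurable_pi_apply 0)).nullMeasurableSet

lemma Bset_nullMeasurable : NullMeasurableSet Bset (volume : Measure (Fin 2 → I)) := by
  have hsub : Bsetᶜ ⊆ {ω : Fin 2 → I | ω 1 = 0} ∪ {ω : Fin 2 → I | ω 0 = 0} := by
    intro ω hω
    simp only [Bset, Set.mem_compl_iff, Set.mem_setOf_eq, not_and_or, not_or, not_not] at hω
    rcases hω with h | h
    · exact Or.inl h
    · exact Or.inr h.2
  have hnull : volume Bsetᶜ = 0 := by
    refine le_antisymm (le_trans (measure_mono hsub) ?_) (zero_le)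
    refine le_trans (measure_union_le _ _) ?_
    rw [coord_null0, coord_null1]
    simp
  have := (NullMeasurableSet.of_null hnull).compl
  rwa [compl_compl] at this

lemma bkr_eq : bkr Aset Bset = {ω : Fin 2 → I | ω 0 ≠ 0 ∧ ω 1 ∈ vitaliI} := by
  ext ω
  constructor
  · intro hω
    obtain ⟨K, hA, hB⟩ := by simpa [bkr, Set.mem_iUnion] using hω
    by_cases h0 : (0 : Fin 2) ∈ K
    · have hω0 : ω 0 ≠ 0 := hA ω (fun i _ => rfl)
      by_cases h1 : (1 : Fin 2) ∈ K
      · exfalso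
        have hagree : ∀ i ∈ Kᶜ, Function.update ω 1 0 i = ω i := by
          intro i hi
          have : i ≠ 1 := fun h => hi (h ▸ h1)
          simp [Function.update_of_ne this]
        have := hB _ hagree
        simp [Bset] at this
      · have h1' : (1 : Fin 2) ∈ Kᶜ := h1
        have hagree : ∀ i ∈ Kᶜ, Function.update ω 0 0 i = ω i := by
          intro i hi
          have : i ≠ 0 := fun h => hi (h ▸ h0)
          simp [Function.update_of_ne this]
        have hmem := hB _ hagree
        simp only [Bset, Set.mem_setOf_eq, Function.update_self,
          Function.update_of_ne (by decide : (1:Fin 2) ≠ 0)] at hmem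
        rcases hmem.2 with hv | hc
        · exact ⟨hω0, hv⟩
        · exact absurd rfl hc
    · exfalso
      have hagree : ∀ i ∈ K, Function.update ω 0 0 i = ω i := by
        intro i hi
        have : i ≠ 0 := fun h => h0 (h ▸ hi)
        simp [Function.update_of_ne this]
      have := hA _ hagree
      simp [Aset] at this
  · rintro ⟨h0, h1⟩
    refine Set.mem_iUnion.mpr ⟨{0}, ?_, ?_⟩
    · intro ω' hω'
      have := hω' 0 rfl
      simpa [Aset, this] using h0
    · intro ω' hω'
      have h1' : ω' 1 = ω 1 := hω' 1 (by simp)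
      refine ⟨?_, Or.inl (h1' ▸ h1)⟩
      rw [h1']
      intro hz
      exact zero_not_mem_vitaliI (hz ▸ h1)

lemma bkr_not_nullMeasurable :
    ¬ NullMeasurableSet (bkr Aset Bset) (volume : Measure (Fin 2 → I)) := by
  rw [bkr_eq]
  intro h
  have hnull : volume {ω : Fin 2 → I | ω 0 = 0 ∧ ω 1 ∈ vitaliI} = 0 := by
    refine le_antisymm (le_trans (measure_mono ?_) coord_null0.le) (zero_le)
    exact fun ω hω => hω.1
  have hW : NullMeasurableSet {ω : Fin 2 → I | ω 1 ∈ vitaliI} volume := by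
    have hsplit : {ω : Fin 2 → I | ω 1 ∈ vitaliI} =
        {ω : Fin 2 → I | ω 0 ≠ 0 ∧ ω 1 ∈ vitaliI} ∪
          {ω : Fin 2 → I | ω 0 = 0 ∧ ω 1 ∈ vitaliI} := by
      ext ω
      by_cases hc : ω 0 = 0 <;> simp [hc]
    rw [hsplit]
    exact h.union (NullMeasurableSet.of_null hnull)
  have hWpre : {ω : Fin 2 → I | ω 1 ∈ vitaliI} =
      ⇑(MeasurableEquiv.finTwoArrow : (Fin 2 → I) ≃ᵐ I × I) ⁻¹'
        ((Set.univ : Set I) ×ˢ vitaliI) := by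
    ext ω; simp [MeasurableEquiv.finTwoArrow, eq_comm]
  rw [hWpre] at hW
  have hfinal : NullMeasurableSet ((Set.univ : Set I) ×ˢ vitaliI) (volume : Measure (I × I)) := by
    have h2 := hW.preimage (hmpFinTwo.symm _).quasiMeasurePreserving
    have heq : ⇑(MeasurableEquiv.finTwoArrow : (Fin 2 → I) ≃ᵐ I × I).symm ⁻¹'
        (⇑(MeasurableEquiv.finTwoArrow : (Fin 2 → I) ≃ᵐ I × I) ⁻¹'
          ((Set.univ : Set I) ×ˢ vitaliI)) = (Set.univ : Set I) ×ˢ vitaliI := by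
      ext p; simp
    rwa [heq] at h2
  exact prod_not_nullMeasurable vitaliI_not_nullMeasurable hfinal

end BKRAux

/-- There exist Lebesgue measurable sets `A, B ⊆ [0,1]^2` such that the BKR combination
`A □ B` is not Lebesgue measurable. -/
theorem exists_bkr_not_nullMeasurable :
    ∃ A B : Set (Fin 2 → I),
      NullMeasurableSet A (volume : Measure (Fin 2 → I)) ∧
        NullMeasurableSet B (volume : Measure (Fin 2 → I)) ∧
          ¬ NullMeasurableSet (bkr A B) (volume : Measure (Fin 2 → I)) :=
  ⟨Aset, Bset, Aset_nullMeasurable, Bset_nullMeasurable, bkr_not_nullMeasurable⟩
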